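/- Let (g, ⟨,⟩) be a pseudo-Riemannian flat Lie algebra and u ∈ [g,g]^⊥ (so R_u is symmetric). Then u·u = 0. -/

import Mathlib

/-- In a pseudo-Riemannian flat Lie algebra, if `u ∈ [g,g]^⊥`
(equivalently `R_u` is symmetric), then `u·u = 0`. -/
theorem flat_symmetric_right_mul_self_product_zero
    (g : Type*) [LieRing g] [LieAlgebra ℝ g] [FiniteDimensional ℝ g]
    (B : LinearMap.BilinForm ℝ g)
    (hsymm : ∀ x y, B x y = B y x)
    (hnd : B.Nondegenerate)
    (m : g →ₗ[ℝ] g →ₗ[ℝ] g)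
    (koszul : ∀ u v w, 2 * B (m u v) w = B ⁅u, v⁆ w + B ⁅w, u⁆ v + B ⁅w, v⁆ u)
    (hflat : ∀ u v x, m ⁅u, v⁆ x = m u (m v x) - m v (m u x))
    (u : g) (hu : ∀ v w, B (m v u) w = B v (m w u)) :
    m u u = 0 := by
  apply hnd.1
  intro w
  rw [hsymm, ← hu w u]
  have h := koszul w u u
  have h0 : B ⁅u, w⁆ u = - B ⁅w, u⁆ u := by
    rw [← lie_skew w u, map_neg, LinearMap.neg_apply, neg_neg]
  have h1 : B ⁅u, u⁆ w = 0 := by simp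
  rw [h0, h1] at h
  linarith
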